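/- Let H ≥ γ be a semibounded self-adjoint operator with associated quadratic form h on the form domain Q(H). Then B (bounded on ℋ) is H-relatively compact if and only if: for every C > 0 and every sequence (ψₙ) in Q(H) with h[ψₙ] ≤ C, ‖ψₙ‖ ≤ C, and ψₙ → 0 weakly in ℋ, one has ‖Bψₙ‖ → 0. -/

import Mathlib

open MeasureTheory Set Filter Topology

noncomputable section

/-- The bounded Borel functional calculus of a self-adjoint operator on a complex
Hilbert space `ℋ`, encoded axiomatically: a star-algebra homomorphism from bounded
Borel functions on `ℝ` (only their values on the spectrum matter) into the bounded
operators, with the sup-norm bound and strong σ-continuity. This data is equivalent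
to the projection-valued spectral measure of a self-adjoint operator with the given
spectrum. -/
structure SelfAdjointCalculus (ℋ : Type) [NormedAddCommGroup ℋ]
    [InnerProductSpace ℂ ℋ] [CompleteSpace ℋ] where
  spectrum : Set ℝ
  spectrum_nonempty : spectrum.Nonempty
  spectrum_closed : IsClosed spectrum
  fc : (ℝ → ℂ) → (ℋ →L[ℂ] ℋ)
  fc_one : fc (fun _ => 1) = ContinuousLinearMap.id ℂ ℋ
  fc_add : ∀ f g, fc (f + g) = fc f + fc g
  fc_smul : ∀ (c : ℂ) (f), fc (c • f) = c • fc f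
  fc_mul : ∀ f g, fc (f * g) = (fc f).comp (fc g)
  fc_star : ∀ f, fc (fun t => starRingEnd ℂ (f t)) = ContinuousLinearMap.adjoint (fc f)
  fc_norm : ∀ (f) (C : ℝ), (∀ t ∈ spectrum, ‖f t‖ ≤ C) → ‖fc f‖ ≤ C
  fc_eqOn : ∀ f g, Set.EqOn f g spectrum → fc f = fc g
  fc_tendsto : ∀ (f : ℕ → ℝ → ℂ) (g : ℝ → ℂ) (C : ℝ),
    (∀ n t, ‖f n t‖ ≤ C) →
    (∀ t ∈ spectrum, Filter.Tendsto (fun n => f n t) Filter.atTop (nhds (g t))) →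
    ∀ x : ℋ, Filter.Tendsto (fun n => fc (f n) x) Filter.atTop (nhds (fc g x))
  fc_proj_infinite : ∀ l ∈ spectrum, ∀ ε > 0,
    fc (Set.indicator {t | dist t l < ε} (fun _ => 1)) ≠ 0

namespace SelfAdjointCalculus

variable {ℋ : Type} [NormedAddCommGroup ℋ] [InnerProductSpace ℂ ℋ] [CompleteSpace ℋ]

/-- The spectral projection `𝟙_I(H)`. -/
def proj (Φ : SelfAdjointCalculus ℋ) (I : Set ℝ) : ℋ →L[ℂ] ℋ :=
  Φ.fc (I.indicator (fun _ => 1))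

/-- `B` is `H`-relatively compact: `B ∘ 𝟙_I(H)` is compact for every bounded Borel set
`I ⊆ ℝ`. -/
def RelCompactWrt (B : ℋ →L[ℂ] ℋ) (Φ : SelfAdjointCalculus ℋ) : Prop :=
  ∀ I : Set ℝ, MeasurableSet I → Bornology.IsBounded I →
    IsCompactOperator (B.comp (Φ.proj I))

/-- The semigroup `e^{-tH}` given by the functional calculus. -/
def heat (Φ : SelfAdjointCalculus ℋ) (t : ℝ) : ℋ →L[ℂ] ℋ :=
  Φ.fc (fun x => Complex.exp (-(t * x)))

/-- The resolvent `(H - λ)⁻¹` given by the functional calculus. -/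
def resolvent (Φ : SelfAdjointCalculus ℋ) (l : ℂ) : ℋ →L[ℂ] ℋ :=
  Φ.fc (fun t => ((t : ℂ) - l)⁻¹)

/-- The resolvent set of the self-adjoint operator: complex numbers away from the
(real) spectrum. -/
def resolventSet (Φ : SelfAdjointCalculus ℋ) : Set ℂ :=
  {l : ℂ | ∀ t ∈ Φ.spectrum, (t : ℂ) ≠ l}

/-- Truncated quadratic form `(min(H,n) u | u)`, an approximation of `h[u]`. -/
def formApprox (Φ : SelfAdjointCalculus ℋ) (n : ℕ) (u : ℋ) : ℝ :=
  (inner ℂ (Φ.fc (fun t => ((min t (n : ℝ) : ℝ) : ℂ)) u) u : ℂ).re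

/-- `u` belongs to the form domain `Q(H)` of a semibounded operator: the truncated
quadratic forms stay bounded. -/
def InFormDomain (Φ : SelfAdjointCalculus ℋ) (u : ℋ) : Prop :=
  BddAbove (Set.range fun n => Φ.formApprox n u)

/-- The quadratic form `h[u] = (Hu|u)` (extended to the form domain). -/
def quadForm (Φ : SelfAdjointCalculus ℋ) (u : ℋ) : ℝ :=
  ⨆ n, Φ.formApprox n u

/-- The essential spectrum: points around which every spectral projection has
infinite-dimensional range. -/
def essSpectrum (Φ : SelfAdjointCalculus ℋ) : Set ℝ :=
  {l : ℝ | ∀ ε > 0, ¬ FiniteDimensional ℂ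
    (LinearMap.range ((Φ.proj (Set.Ioo (l - ε) (l + ε))) : ℋ →ₗ[ℂ] ℋ))}

end SelfAdjointCalculus

set_option linter.unusedSectionVars false

open Filter Topology


section HilbertAux

variable {E : Type} [NormedAddCommGroup E] [InnerProductSpace ℂ E] [CompleteSpace E]

/-- Weak Bolzano–Weierstrass: every norm-bounded sequence in a Hilbert space has a
weakly convergent subsequence. -/
lemma weakBW (x : ℕ → E) (M : ℝ) (hM : 0 ≤ M) (hx : ∀ n, ‖x n‖ ≤ M) :
    ∃ (φ : ℕ → ℕ) (z : E), StrictMono φ ∧ ‖z‖ ≤ M ∧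
      ∀ y : E, Tendsto (fun k => (inner ℂ y (x (φ k)) : ℂ)) atTop (𝓝 (inner ℂ y z)) := by
  classical
  -- Step 1: diagonal extraction via compactness of a product of closed balls
  set g0 : ℕ → ℕ → ℂ := fun n m => inner ℂ (x m) (x n) with hg0
  have hball : ∀ n, g0 n ∈ Set.pi Set.univ (fun _ : ℕ => Metric.closedBall (0:ℂ) (M*M)) := by
    intro n m _
    rw [Metric.mem_closedBall, dist_zero_right]
    calc ‖(inner ℂ (x m) (x n) : ℂ)‖ ≤ ‖x m‖ * ‖x n‖ := norm_inner_le_norm _ _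
      _ ≤ M * M := mul_le_mul (hx m) (hx n) (norm_nonneg _) hM
  have hcpt : IsCompact (Set.pi Set.univ fun _ : ℕ => Metric.closedBall (0:ℂ) (M*M)) :=
    isCompact_univ_pi fun _ => isCompact_closedBall _ _
  obtain ⟨g, _, φ, hφ, hconv⟩ := hcpt.isSeqCompact hball
  have hpt : ∀ m, Tendsto (fun k => (inner ℂ (x m) (x (φ k)) : ℂ)) atTop (𝓝 (g m)) := by
    intro m
    exact tendsto_pi_nhds.1 hconv m
  -- Step 2: convergence of ⟪y, x (φ k)⟫ for every y
  set K := (Submodule.span ℂ (Set.range x)).topologicalClosure with hK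
  have hxK : ∀ n, x n ∈ K :=
    fun n => Submodule.le_topologicalClosure _ (Submodule.subset_span ⟨n, rfl⟩)
  have hspan : ∀ y ∈ Submodule.span ℂ (Set.range x),
      ∃ c : ℂ, Tendsto (fun k => (inner ℂ y (x (φ k)) : ℂ)) atTop (𝓝 c) := by
    intro y hy
    induction hy using Submodule.span_induction with
    | mem y hmem =>
        obtain ⟨m, rfl⟩ := hmem
        exact ⟨g m, hpt m⟩
    | zero => exact ⟨0, by simp [inner_zero_left, tendsto_const_nhds]⟩
    | add y z _ _ hy hz =>
        obtain ⟨cy, hcy⟩ := hy; obtain ⟨cz, hcz⟩ := hz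
        exact ⟨cy + cz, by simpa [inner_add_left] using hcy.add hcz⟩
    | smul a y _ hy =>
        obtain ⟨cy, hcy⟩ := hy
        exact ⟨starRingEnd ℂ a * cy, by simpa [inner_smul_left, mul_comm] using hcy.const_mul (starRingEnd ℂ a)⟩
  have hMpos : (0:ℝ) < M + 1 := by linarith
  have hKc : ∀ y ∈ closure ((Submodule.span ℂ (Set.range x) : Submodule ℂ E) : Set E),
      ∃ c : ℂ, Tendsto (fun k => (inner ℂ y (x (φ k)) : ℂ)) atTop (𝓝 c) := by
    intro y hy
    have hcs : CauchySeq (fun k => (inner ℂ y (x (φ k)) : ℂ)) := by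
      rw [Metric.cauchySeq_iff']
      intro ε hε
      obtain ⟨y', hy'mem, hy'⟩ := Metric.mem_closure_iff.1 hy (ε / (4 * (M + 1))) (by positivity)
      obtain ⟨c, hc⟩ := hspan y' hy'mem
      have hcs' : CauchySeq (fun k => (inner ℂ y' (x (φ k)) : ℂ)) := hc.cauchySeq
      rw [Metric.cauchySeq_iff'] at hcs'
      obtain ⟨N, hN⟩ := hcs' (ε / 2) (by positivity)
      refine ⟨N, fun n hn => ?_⟩
      have hbd : ∀ m, dist (inner ℂ y (x (φ m)) : ℂ) (inner ℂ y' (x (φ m)) : ℂ) ≤ ε / 4 := by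
        intro m
        rw [dist_eq_norm, ← inner_sub_left]
        have h1 : ‖y - y'‖ ≤ ε / (4 * (M+1)) := by
          rw [← dist_eq_norm]; exact hy'.le
        have h2 : ‖x (φ m)‖ ≤ M + 1 := (hx _).trans (by linarith)
        calc ‖(inner ℂ (y - y') (x (φ m)) : ℂ)‖ ≤ ‖y - y'‖ * ‖x (φ m)‖ := norm_inner_le_norm _ _
          _ ≤ (ε / (4 * (M+1))) * (M+1) :=
              mul_le_mul h1 h2 (norm_nonneg _) (by positivity)
          _ = ε / 4 := by field_simp
      have ht := dist_triangle4 (inner ℂ y (x (φ n)) : ℂ) (inner ℂ y' (x (φ n)) : ℂ)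
        (inner ℂ y' (x (φ N)) : ℂ) (inner ℂ y (x (φ N)) : ℂ)
      have h3 := hbd n
      have h4 := hbd N
      have h5 := hN n hn
      rw [dist_comm (inner ℂ y' (x (φ N)) : ℂ) (inner ℂ y (x (φ N)) : ℂ)] at ht
      linarith
    exact cauchySeq_tendsto_of_complete hcs
  haveI : CompleteSpace K := (Submodule.isClosed_topologicalClosure _).completeSpace_coe
  have hall : ∀ y : E, ∃ c : ℂ, Tendsto (fun k => (inner ℂ y (x (φ k)) : ℂ)) atTop (𝓝 c) := by
    intro y
    obtain ⟨y₁, hy₁, y₂, hy₂, rfl⟩ := K.exists_add_mem_mem_orthogonal y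
    obtain ⟨c, hc⟩ := hKc y₁ (by
      have := hy₁
      rwa [hK, ← Submodule.topologicalClosure_coe] at *)
    refine ⟨c, ?_⟩
    have hzero : ∀ k, (inner ℂ y₂ (x (φ k)) : ℂ) = 0 := by
      intro k
      have h6 := (Submodule.mem_orthogonal K y₂).1 hy₂ _ (hxK (φ k))
      rw [← inner_conj_symm, h6, map_zero]
    have : (fun k => (inner ℂ (y₁ + y₂) (x (φ k)) : ℂ)) = fun k => (inner ℂ y₁ (x (φ k)) : ℂ) := by
      funext k; rw [inner_add_left, hzero, add_zero]
    rw [this]; exact hc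
  choose c hc using hall
  have hd : ∀ y, Tendsto (fun k => (inner ℂ (x (φ k)) y : ℂ)) atTop (𝓝 (starRingEnd ℂ (c y))) := by
    intro y
    have := (Complex.continuous_conj.tendsto (c y)).comp (hc y)
    simpa [Function.comp_def, inner_conj_symm] using this
  have hadd : ∀ y z, starRingEnd ℂ (c (y + z)) = starRingEnd ℂ (c y) + starRingEnd ℂ (c z) :=
    fun y z => tendsto_nhds_unique (hd (y+z)) (by simpa [inner_add_right] using (hd y).add (hd z))
  have hsmul : ∀ (a : ℂ) (y), starRingEnd ℂ (c (a • y)) = a * starRingEnd ℂ (c y) :=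
    fun a y => tendsto_nhds_unique (hd (a • y)) (by simpa [inner_smul_right] using (hd y).const_mul a)
  have hbound : ∀ y, ‖starRingEnd ℂ (c y)‖ ≤ M * ‖y‖ := by
    intro y
    refine le_of_tendsto (hd y).norm (Eventually.of_forall fun k => ?_)
    exact (norm_inner_le_norm _ _).trans (mul_le_mul_of_nonneg_right (hx _) (norm_nonneg _))
  let L : E →L[ℂ] ℂ := LinearMap.mkContinuous
    { toFun := fun y => starRingEnd ℂ (c y)
      map_add' := hadd
      map_smul' := fun a y => by simpa using hsmul a y } M hbound
  set z := (InnerProductSpace.toDual ℂ E).symm L with hz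
  have hLz : ∀ y, (inner ℂ z y : ℂ) = starRingEnd ℂ (c y) := by
    intro y
    rw [hz, InnerProductSpace.toDual_symm_apply]
    rfl
  refine ⟨φ, z, hφ, ?_, ?_⟩
  · have h7 : ‖z‖ = ‖L‖ := by
      rw [hz]; exact LinearIsometryEquiv.norm_map (InnerProductSpace.toDual ℂ E).symm L
    rw [h7]
    exact LinearMap.mkContinuous_norm_le _ hM _
  · intro y
    have h8 : (inner ℂ y z : ℂ) = c y := by
      rw [← inner_conj_symm, hLz, Complex.conj_conj]
    rw [h8]; exact hc y

/-- Compact operators on Hilbert space are completely continuous. -/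
lemma compact_cc (T : E →L[ℂ] E) (hT : IsCompactOperator T) (u : ℕ → E) (M : ℝ)
    (hu : ∀ n, ‖u n‖ ≤ M)
    (hw : ∀ y : E, Tendsto (fun n => (inner ℂ y (u n) : ℂ)) atTop (𝓝 0)) :
    Tendsto (fun n => T (u n)) atTop (𝓝 0) := by
  obtain ⟨K, hK, hmem⟩ := hT
  obtain ⟨r, hr, hballK⟩ := Metric.mem_nhds_iff.1 hmem
  have hM0 : (0:ℝ) ≤ M := le_trans (norm_nonneg _) (hu 0)
  set s : ℝ := r / (2 * (M + 1)) with hs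
  have hs0 : 0 < s := by positivity
  have hsM : s * (M + 1) = r / 2 := by rw [hs]; field_simp
  have hmemK : ∀ n, T ((s:ℂ) • u n) ∈ K := by
    intro n
    apply hballK
    rw [Metric.mem_ball, dist_zero_right, norm_smul]
    have h1 : ‖(s:ℂ)‖ = s := by
      rw [Complex.norm_real, Real.norm_eq_abs, abs_of_pos hs0]
    rw [h1]
    have h2 : s * ‖u n‖ ≤ s * (M+1) :=
      mul_le_mul_of_nonneg_left (le_trans (hu n) (by linarith)) hs0.le
    linarith
  have hmain : Tendsto (fun n => T ((s:ℂ) • u n)) atTop (𝓝 0) := by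
    apply tendsto_of_subseq_tendsto
    intro ns hns
    obtain ⟨w, _, ms, hms, hconv⟩ := hK.isSeqCompact (fun n => hmemK (ns n))
    have hw0 : w = 0 := by
      have hweak : ∀ y : E,
          Tendsto (fun j => (inner ℂ y (T ((s:ℂ) • u (ns (ms j)))) : ℂ)) atTop (𝓝 0) := by
        intro y
        have h1 : ∀ n, (inner ℂ y (T ((s:ℂ) • u n)) : ℂ)
            = (s:ℂ) * inner ℂ (ContinuousLinearMap.adjoint T y) (u n) := by
          intro n
          rw [← ContinuousLinearMap.adjoint_inner_left, inner_smul_right]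
        simp only [h1]
        have h3 : Tendsto (fun j => (inner ℂ (ContinuousLinearMap.adjoint T y) (u (ns (ms j))) : ℂ))
            atTop (𝓝 0) := (hw _).comp (hns.comp hms.tendsto_atTop)
        simpa using h3.const_mul (s:ℂ)
      have h4 : ∀ y : E, (inner ℂ y w : ℂ) = 0 := by
        intro y
        have h5 : Tendsto (fun j => (inner ℂ y (T ((s:ℂ) • u (ns (ms j)))) : ℂ)) atTop
            (𝓝 (inner ℂ y w)) := by
          have := Tendsto.inner (𝕜 := ℂ) (tendsto_const_nhds (x := y) (f := atTop)) hconv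
          exact this
        exact tendsto_nhds_unique h5 (hweak y)
      exact inner_self_eq_zero.1 (h4 w)
    exact ⟨ms, by rw [← hw0]; exact hconv⟩
  have hsne : (s:ℂ) ≠ 0 := Complex.ofReal_ne_zero.2 hs0.ne'
  have heq : ∀ n, T (u n) = (s:ℂ)⁻¹ • T ((s:ℂ) • u n) := by
    intro n
    rw [_root_.map_smul, smul_smul, inv_mul_cancel₀ hsne, one_smul]
  have hfin := hmain.const_smul ((s:ℂ)⁻¹)
  simp only [smul_zero] at hfin
  simp only [← heq] at hfin
  exact hfin

end HilbertAux

section FCAux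

variable {ℋ : Type} [NormedAddCommGroup ℋ] [InnerProductSpace ℂ ℋ] [CompleteSpace ℋ]
variable (Φ : SelfAdjointCalculus ℋ)

lemma fc_real_adj (f : ℝ → ℝ) :
    ContinuousLinearMap.adjoint (Φ.fc fun t => (f t : ℂ)) = Φ.fc fun t => (f t : ℂ) := by
  rw [← Φ.fc_star]
  congr 1
  funext t
  exact Complex.conj_ofReal _

lemma re_inner_self (w : ℋ) : (inner ℂ w w : ℂ).re = ‖w‖^2 := by
  simpa using inner_self_eq_norm_sq (𝕜 := ℂ) w

lemma fc_inner_nonneg (f : ℝ → ℝ) (hf : ∀ t ∈ Φ.spectrum, 0 ≤ f t) (u : ℋ) :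
    0 ≤ (inner ℂ (Φ.fc (fun t => (f t : ℂ)) u) u : ℂ).re := by
  set g : ℝ → ℂ := fun t => (Real.sqrt (f t) : ℂ) with hg
  have h1 : Φ.fc (fun t => (f t:ℂ)) = Φ.fc (g * g) := by
    apply Φ.fc_eqOn
    intro t ht
    simp only [hg, Pi.mul_apply, ← Complex.ofReal_mul, Real.mul_self_sqrt (hf t ht)]
  have hadj : ContinuousLinearMap.adjoint (Φ.fc g) = Φ.fc g := fc_real_adj Φ _
  have h2 : (inner ℂ ((Φ.fc g).comp (Φ.fc g) u) u : ℂ) = inner ℂ (Φ.fc g u) (Φ.fc g u) := by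
    rw [ContinuousLinearMap.comp_apply]
    calc (inner ℂ (Φ.fc g ((Φ.fc g) u)) u : ℂ)
        = inner ℂ ((ContinuousLinearMap.adjoint (Φ.fc g)) ((Φ.fc g) u)) u := by rw [hadj]
      _ = inner ℂ ((Φ.fc g) u) ((Φ.fc g) u) := ContinuousLinearMap.adjoint_inner_left _ _ _
  rw [h1, Φ.fc_mul, h2, re_inner_self]
  positivity

lemma fc_inner_mono (f g : ℝ → ℝ) (h : ∀ t ∈ Φ.spectrum, f t ≤ g t) (u : ℋ) :
    (inner ℂ (Φ.fc (fun t => (f t:ℂ)) u) u : ℂ).re ≤ (inner ℂ (Φ.fc (fun t => (g t:ℂ)) u) u : ℂ).re := by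
  have key : Φ.fc (fun t => (g t : ℂ))
      = Φ.fc (fun t => ((g t - f t : ℝ) : ℂ)) + Φ.fc (fun t => (f t:ℂ)) := by
    rw [← Φ.fc_add]
    congr 1
    funext t
    simp only [Pi.add_apply]
    push_cast
    ring
  rw [key]
  simp only [ContinuousLinearMap.add_apply, inner_add_left, Complex.add_re]
  have := fc_inner_nonneg Φ (fun t => g t - f t) (fun t ht => sub_nonneg.2 (h t ht)) u
  linarith

lemma proj_idem (I : Set ℝ) : (Φ.proj I).comp (Φ.proj I) = Φ.proj I := by
  unfold SelfAdjointCalculus.proj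
  rw [← Φ.fc_mul]
  congr 1
  funext t
  by_cases h : t ∈ I <;> simp [Set.indicator_apply, h]

lemma proj_eq_real (I : Set ℝ) :
    Φ.proj I = Φ.fc (fun t => ((Set.indicator I (fun _ => (1:ℝ)) t : ℝ) : ℂ)) := by
  unfold SelfAdjointCalculus.proj
  congr 1
  funext t
  by_cases h : t ∈ I <;> simp [Set.indicator_apply, h]

lemma proj_adj (I : Set ℝ) : ContinuousLinearMap.adjoint (Φ.proj I) = Φ.proj I := by
  rw [proj_eq_real]
  exact fc_real_adj Φ _

lemma norm_proj_le_one (I : Set ℝ) : ‖Φ.proj I‖ ≤ 1 := by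
  apply Φ.fc_norm
  intro t _
  by_cases h : t ∈ I <;> simp [Set.indicator_apply, h]

lemma re_inner_proj (I : Set ℝ) (u : ℋ) :
    (inner ℂ (Φ.proj I u) u : ℂ).re = ‖Φ.proj I u‖^2 := by
  have h1 : Φ.proj I u = Φ.proj I (Φ.proj I u) := by
    rw [← ContinuousLinearMap.comp_apply, proj_idem]
  have h2 : (inner ℂ (Φ.proj I u) u : ℂ) = inner ℂ (Φ.proj I u) (Φ.proj I u) := by
    nth_rewrite 1 [h1]
    calc (inner ℂ (Φ.proj I (Φ.proj I u)) u : ℂ)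
        = inner ℂ ((ContinuousLinearMap.adjoint (Φ.proj I)) (Φ.proj I u)) u := by rw [proj_adj]
      _ = inner ℂ (Φ.proj I u) (Φ.proj I u) := ContinuousLinearMap.adjoint_inner_left _ _ _
  rw [h2, re_inner_self]

lemma norm_proj_apply_le (I : Set ℝ) (u : ℋ) : ‖Φ.proj I u‖ ≤ ‖u‖ := by
  calc ‖Φ.proj I u‖ ≤ ‖Φ.proj I‖ * ‖u‖ := (Φ.proj I).le_opNorm u
    _ ≤ 1 * ‖u‖ := mul_le_mul_of_nonneg_right (norm_proj_le_one Φ I) (norm_nonneg u)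
    _ = ‖u‖ := one_mul _

/-- The key lower bound: `R ‖𝟙_{(R,∞)} u‖² + γ ‖𝟙_{[γ,R]} u‖² ≤ h[u]`. -/
lemma tail_bound {γ : ℝ} (hγ : Φ.spectrum ⊆ Set.Ici γ) {u : ℋ} (hu : Φ.InFormDomain u)
    {R : ℝ} (hRγ : γ ≤ R) :
    R * ‖Φ.proj (Set.Ioi R) u‖^2 + γ * ‖Φ.proj (Set.Icc γ R) u‖^2 ≤ Φ.quadForm u := by
  set n := ⌈R⌉₊ with hn'
  have hn : R ≤ (n:ℝ) := Nat.le_ceil R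
  set f : ℝ → ℝ := fun t => R * Set.indicator (Set.Ioi R) (fun _ => (1:ℝ)) t
      + γ * Set.indicator (Set.Icc γ R) (fun _ => (1:ℝ)) t with hf
  have key : Φ.fc (fun t => (f t : ℂ))
      = (R:ℂ) • Φ.proj (Set.Ioi R) + (γ:ℂ) • Φ.proj (Set.Icc γ R) := by
    rw [proj_eq_real, proj_eq_real, ← Φ.fc_smul, ← Φ.fc_smul, ← Φ.fc_add]
    congr 1
    funext t
    simp only [hf, Pi.add_apply, Pi.smul_apply, smul_eq_mul]
    push_cast
    ring
  have hmono := fc_inner_mono Φ f (fun t => min t (n:ℝ)) (by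
    intro t ht
    have htγ : γ ≤ t := hγ ht
    simp only [hf, Set.indicator_apply, Set.mem_Ioi, Set.mem_Icc]
    by_cases hR : R < t
    · rw [if_pos hR, if_neg (fun hmem => absurd hmem.2 (not_le.2 hR))]
      simp only [mul_one, mul_zero, add_zero]
      exact le_min hR.le hn
    · rw [if_neg hR, if_pos ⟨htγ, not_lt.1 hR⟩]
      simp only [mul_one, mul_zero, zero_add]
      exact le_min htγ (hRγ.trans hn)) u
  rw [key] at hmono
  have hlhs : (inner ℂ (((R:ℂ) • Φ.proj (Set.Ioi R) + (γ:ℂ) • Φ.proj (Set.Icc γ R)) u) u : ℂ).re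
      = R * ‖Φ.proj (Set.Ioi R) u‖^2 + γ * ‖Φ.proj (Set.Icc γ R) u‖^2 := by
    simp only [ContinuousLinearMap.add_apply, ContinuousLinearMap.smul_apply, inner_add_left,
      inner_smul_left, Complex.add_re, Complex.mul_re, Complex.conj_ofReal, Complex.ofReal_re,
      Complex.ofReal_im, zero_mul, sub_zero]
    rw [re_inner_proj, re_inner_proj]
  rw [hlhs] at hmono
  calc R * ‖Φ.proj (Set.Ioi R) u‖^2 + γ * ‖Φ.proj (Set.Icc γ R) u‖^2
      ≤ Φ.formApprox n u := hmono
    _ ≤ Φ.quadForm u := le_ciSup hu n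

/-- For vectors in the range of a compactly supported spectral projection, the
truncated forms are uniformly bounded. -/
lemma formApprox_le {I : Set ℝ} {R0 : ℝ} (hR0 : 0 ≤ R0) (hI : ∀ t ∈ I, |t| ≤ R0) {u : ℋ}
    (hu : Φ.proj I u = u) (n : ℕ) :
    Φ.formApprox n u ≤ R0 * ‖u‖^2 := by
  have h1 : Φ.fc (fun t => ((min t (n : ℝ) : ℝ) : ℂ)) u
      = Φ.fc ((fun t => ((min t (n : ℝ) : ℝ) : ℂ)) * Set.indicator I (fun _ => (1:ℂ))) u := by
    rw [Φ.fc_mul, ContinuousLinearMap.comp_apply]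
    show Φ.fc _ u = Φ.fc _ (Φ.proj I u)
    rw [hu]
  have hnorm : ‖Φ.fc ((fun t => ((min t (n : ℝ) : ℝ) : ℂ)) * Set.indicator I (fun _ => (1:ℂ)))‖
      ≤ R0 := by
    apply Φ.fc_norm
    intro t _
    by_cases ht : t ∈ I
    · simp only [Pi.mul_apply, Set.indicator_of_mem ht, mul_one]
      rw [Complex.norm_real, Real.norm_eq_abs]
      have : |min t (n:ℝ)| ≤ |t| := by
        rcases le_total t (n:ℝ) with h | h
        · rw [min_eq_left h]
        · rw [min_eq_right h, abs_of_nonneg (Nat.cast_nonneg n)]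
          exact le_trans h (le_abs_self t)
      exact this.trans (hI t ht)
    · simp only [Pi.mul_apply, Set.indicator_of_notMem ht, mul_zero, norm_zero]
      exact hR0
  show (inner ℂ (Φ.fc (fun t => ((min t (n : ℝ) : ℝ) : ℂ)) u) u : ℂ).re ≤ R0 * ‖u‖^2
  rw [h1]
  set T := Φ.fc ((fun t => ((min t (n : ℝ) : ℝ) : ℂ)) * Set.indicator I (fun _ => (1:ℂ))) with hT
  calc (inner ℂ (T u) u : ℂ).re ≤ ‖(inner ℂ (T u) u : ℂ)‖ := Complex.re_le_norm _
    _ ≤ ‖T u‖ * ‖u‖ := norm_inner_le_norm _ _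
    _ ≤ (‖T‖ * ‖u‖) * ‖u‖ :=
        mul_le_mul_of_nonneg_right (T.le_opNorm u) (norm_nonneg u)
    _ ≤ (R0 * ‖u‖) * ‖u‖ :=
        mul_le_mul_of_nonneg_right (mul_le_mul_of_nonneg_right hnorm (norm_nonneg u)) (norm_nonneg u)
    _ = R0 * ‖u‖^2 := by ring

/-- Resolution of the identity below/above level `R`. -/
lemma proj_sum {γ : ℝ} (hγ : Φ.spectrum ⊆ Set.Ici γ) {R : ℝ} (hRγ : γ ≤ R) (u : ℋ) :
    Φ.proj (Set.Icc γ R) u + Φ.proj (Set.Ioi R) u = u := by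
  have h : Φ.proj (Set.Icc γ R) + Φ.proj (Set.Ioi R) = ContinuousLinearMap.id ℂ ℋ := by
    unfold SelfAdjointCalculus.proj
    rw [← Φ.fc_add, ← Φ.fc_one]
    apply Φ.fc_eqOn
    intro t ht
    have htγ : γ ≤ t := hγ ht
    by_cases hR : t ≤ R
    · simp [Set.indicator_apply, Set.mem_Icc, Set.mem_Ioi, htγ, hR, not_lt.2 hR]
    · simp [Set.indicator_apply, Set.mem_Icc, Set.mem_Ioi, hR, lt_of_not_ge hR]
  have := congrArg (fun T : ℋ →L[ℂ] ℋ => T u) h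
  simpa using this

end FCAux

/-- For `H ≥ γ` semibounded with form `h` on `Q(H)`, the operator `B` is
`H`-relatively compact iff every sequence in `Q(H)` with bounded form and norm which
converges weakly to `0` is mapped by `B` to a norm-null sequence. -/
theorem stmt5 {ℋ : Type} [NormedAddCommGroup ℋ] [InnerProductSpace ℂ ℋ] [CompleteSpace ℋ]
    (Φ : SelfAdjointCalculus ℋ) (γ : ℝ) (hγ : Φ.spectrum ⊆ Set.Ici γ)
    (B : ℋ →L[ℂ] ℋ) :
    SelfAdjointCalculus.RelCompactWrt B Φ ↔
      ∀ C > (0 : ℝ), ∀ ψ : ℕ → ℋ,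
        (∀ n, Φ.InFormDomain (ψ n)) →
        (∀ n, Φ.quadForm (ψ n) ≤ C) →
        (∀ n, ‖ψ n‖ ≤ C) →
        (∀ y : ℋ, Filter.Tendsto (fun n => (inner ℂ y (ψ n) : ℂ)) Filter.atTop (nhds 0)) →
        Filter.Tendsto (fun n => ‖B (ψ n)‖) Filter.atTop (nhds 0) := by
  constructor
  · -- Forward: relative compactness implies the sequential criterion
    intro hrel C hC ψ hdom hform hnorm hweak
    rw [Metric.tendsto_atTop]
    intro ε hε
    set D := C + |γ| * C^2 with hD'
    have hD : 0 ≤ D := by rw [hD']; positivity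
    set R := max (max γ 0 + 1) (D * (2*(‖B‖+1)/ε)^2 + 1) with hR'
    have hRpos : 0 < R := lt_of_lt_of_le (by positivity : (0:ℝ) < max γ 0 + 1) (le_max_left _ _)
    have hRγ : γ ≤ R := by
      have h0 := le_max_left γ 0
      have := le_max_left (max γ 0 + 1) (D * (2*(‖B‖+1)/ε)^2 + 1)
      rw [hR']
      linarith
    have htail : ∀ n, ‖Φ.proj (Set.Ioi R) (ψ n)‖^2 * R ≤ D := by
      intro n
      have h1 := tail_bound Φ hγ (hdom n) hRγ
      have hP : ‖Φ.proj (Set.Icc γ R) (ψ n)‖ ≤ C := (norm_proj_apply_le Φ _ _).trans (hnorm n)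
      have hP2 : ‖Φ.proj (Set.Icc γ R) (ψ n)‖^2 ≤ C^2 := by
        nlinarith [norm_nonneg (Φ.proj (Set.Icc γ R) (ψ n))]
      have h2 := hform n
      have hint1 : (0:ℝ) ≤ (γ + |γ|) * ‖Φ.proj (Set.Icc γ R) (ψ n)‖^2 :=
        mul_nonneg (by linarith [neg_abs_le γ]) (sq_nonneg _)
      have hint2 : |γ| * ‖Φ.proj (Set.Icc γ R) (ψ n)‖^2 ≤ |γ| * C^2 :=
        mul_le_mul_of_nonneg_left hP2 (abs_nonneg γ)
      nlinarith
    have hterm2 : ∀ n, ‖B‖ * ‖Φ.proj (Set.Ioi R) (ψ n)‖ ≤ ε/2 := by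
      intro n
      refine le_of_pow_le_pow_left₀ two_ne_zero (by positivity) ?_
      have hRe : D * (2*(‖B‖+1)/ε)^2 + 1 ≤ R := le_max_right _ _
      have h2 : (2*(‖B‖+1)/ε)^2 * ε^2 = 4*(‖B‖+1)^2 := by field_simp; ring
      have hkey : 4 * (‖B‖^2 * D) ≤ R * ε^2 := by
        nlinarith [mul_le_mul_of_nonneg_right hRe (sq_nonneg ε), hD, norm_nonneg B,
          sq_nonneg ε, mul_nonneg hD (norm_nonneg B)]
      have h4 : ‖Φ.proj (Set.Ioi R) (ψ n)‖^2 ≤ D / R := by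
        rw [le_div_iff₀ hRpos]; exact htail n
      have h5 : ‖B‖^2 * (D / R) ≤ ε^2/4 := by
        rw [← mul_div_assoc, div_le_div_iff₀ hRpos (by norm_num : (0:ℝ) < 4)]
        nlinarith
      calc (‖B‖ * ‖Φ.proj (Set.Ioi R) (ψ n)‖)^2
          = ‖B‖^2 * ‖Φ.proj (Set.Ioi R) (ψ n)‖^2 := by ring
        _ ≤ ‖B‖^2 * (D/R) := mul_le_mul_of_nonneg_left h4 (sq_nonneg _)
        _ ≤ ε^2/4 := h5
        _ = (ε/2)^2 := by ring
    have hTc : IsCompactOperator (B.comp (Φ.proj (Set.Icc γ R))) :=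
      hrel _ measurableSet_Icc (Metric.isBounded_Icc γ R)
    have hcc := compact_cc (B.comp (Φ.proj (Set.Icc γ R))) hTc ψ C hnorm hweak
    have hccn : Tendsto (fun n => ‖(B.comp (Φ.proj (Set.Icc γ R))) (ψ n)‖) atTop (𝓝 0) := by
      simpa using hcc.norm
    have hev : ∀ᶠ n in atTop, ‖(B.comp (Φ.proj (Set.Icc γ R))) (ψ n)‖ < ε/2 :=
      hccn.eventually_lt_const (by positivity)
    obtain ⟨N, hN⟩ := eventually_atTop.1 hev
    refine ⟨N, fun n hn => ?_⟩
    rw [Real.dist_eq, sub_zero, abs_of_nonneg (norm_nonneg _)]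
    have hsplit := proj_sum Φ hγ hRγ (ψ n)
    calc ‖B (ψ n)‖
        = ‖B (Φ.proj (Set.Icc γ R) (ψ n) + Φ.proj (Set.Ioi R) (ψ n))‖ := by rw [hsplit]
      _ = ‖B (Φ.proj (Set.Icc γ R) (ψ n)) + B (Φ.proj (Set.Ioi R) (ψ n))‖ := by
          rw [B.map_add]
      _ ≤ ‖B (Φ.proj (Set.Icc γ R) (ψ n))‖ + ‖B (Φ.proj (Set.Ioi R) (ψ n))‖ := norm_add_le _ _
      _ ≤ ‖(B.comp (Φ.proj (Set.Icc γ R))) (ψ n)‖ + ‖B‖ * ‖Φ.proj (Set.Ioi R) (ψ n)‖ := by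
          rw [ContinuousLinearMap.comp_apply]
          exact add_le_add le_rfl (B.le_opNorm _)
      _ < ε/2 + ε/2 := add_lt_add_of_lt_of_le (hN n hn) (hterm2 n)
      _ = ε := by ring
  · -- Reverse: the sequential criterion implies relative compactness
    intro hcond I hImeas hIbd
    obtain ⟨R0, hR0sub⟩ : ∃ r, I ⊆ Metric.closedBall (0:ℝ) r := hIbd.subset_closedBall 0
    set R1 := max R0 0 with hR1'
    have hR1 : 0 ≤ R1 := le_max_right _ _
    have hIsub : ∀ t ∈ I, |t| ≤ R1 := by
      intro t ht
      have := hR0sub ht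
      rw [Metric.mem_closedBall, Real.dist_eq, sub_zero] at this
      exact this.trans (le_max_left _ _)
    set P := Φ.proj I with hP'
    suffices h : IsCompact (closure ((B.comp P) '' Metric.ball 0 1)) by
      exact (isCompactOperator_iff_isCompact_closure_image_ball
        ((B.comp P : ℋ →L[ℂ] ℋ) : ℋ →ₗ[ℂ] ℋ) one_pos).2 h
    apply IsSeqCompact.isCompact
    intro y hy
    have happrox : ∀ n : ℕ, ∃ u : ℋ, u ∈ Metric.ball (0:ℋ) 1 ∧
        dist (y n) ((B.comp P) u) < 1/(n+1) := by
      intro n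
      obtain ⟨b, hb, hdb⟩ := Metric.mem_closure_iff.1 (hy n) (1/(n+1)) (by positivity)
      obtain ⟨u, hu, rfl⟩ := hb
      exact ⟨u, hu, hdb⟩
    choose u hu hdist using happrox
    set v := fun n => P (u n) with hv'
    have hv : ∀ n, ‖v n‖ ≤ 1 := by
      intro n
      have hun : ‖u n‖ ≤ 1 := by
        have := hu n
        rw [Metric.mem_ball, dist_zero_right] at this
        exact this.le
      calc ‖P (u n)‖ ≤ ‖u n‖ := norm_proj_apply_le Φ I (u n)
        _ ≤ 1 := hun
    obtain ⟨φ, z, hφ, hznorm, hzconv⟩ := weakBW v 1 zero_le_one hv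
    have hPv : ∀ n, P (v n) = v n := by
      intro n
      rw [hv']
      show P (P (u n)) = P (u n)
      rw [← ContinuousLinearMap.comp_apply, hP', proj_idem]
    have hPz : P z = z := by
      have h1 : ∀ y' : ℋ, (inner ℂ y' (P z) : ℂ) = inner ℂ y' z := by
        intro y'
        rw [← ContinuousLinearMap.adjoint_inner_left]
        have h2 := hzconv (ContinuousLinearMap.adjoint P y')
        have h3 : ∀ k, (inner ℂ (ContinuousLinearMap.adjoint P y') (v (φ k)) : ℂ)
            = inner ℂ y' (v (φ k)) := by
          intro k
          rw [ContinuousLinearMap.adjoint_inner_left, hPv]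
        simp only [h3] at h2
        exact tendsto_nhds_unique h2 (hzconv y')
      have h5 : (inner ℂ (P z - z) (P z - z) : ℂ) = 0 := by
        rw [inner_sub_right, h1, sub_self]
      exact sub_eq_zero.1 (inner_self_eq_zero.1 h5)
    set ψ := fun k => v (φ k) - z with hψ'
    have hPψ : ∀ k, P (ψ k) = ψ k := by
      intro k
      rw [hψ', map_sub, hPv, hPz]
    have hψnorm : ∀ k, ‖ψ k‖ ≤ 2 := fun k =>
      (norm_sub_le _ _).trans (by linarith [hv (φ k), hznorm])
    have happle : ∀ k n, Φ.formApprox n (ψ k) ≤ R1 * ‖ψ k‖^2 := fun k n =>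
      formApprox_le Φ hR1 hIsub (hPψ k) n
    have hdom : ∀ k, Φ.InFormDomain (ψ k) := by
      intro k
      refine ⟨R1 * ‖ψ k‖^2, ?_⟩
      rintro _ ⟨n, rfl⟩
      exact happle k n
    have hform : ∀ k, Φ.quadForm (ψ k) ≤ R1 * 4 := by
      intro k
      refine ciSup_le fun n => (happle k n).trans ?_
      have h6 : ‖ψ k‖^2 ≤ 4 := by nlinarith [hψnorm k, norm_nonneg (ψ k)]
      exact mul_le_mul_of_nonneg_left h6 hR1
    set C := max (R1 * 4) 2 with hC'
    have hC : (0:ℝ) < C := lt_of_lt_of_le two_pos (le_max_right _ _)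
    have hweak : ∀ y' : ℋ, Tendsto (fun k => (inner ℂ y' (ψ k) : ℂ)) atTop (𝓝 0) := by
      intro y'
      have := (hzconv y').sub (tendsto_const_nhds (x := (inner ℂ y' z : ℂ)))
      simpa [hψ', inner_sub_right] using this
    have hBψ := hcond C hC ψ hdom
      (fun k => (hform k).trans (le_max_left _ _))
      (fun k => (hψnorm k).trans (le_max_right _ _)) hweak
    have hB0 : Tendsto (fun k => B (ψ k)) atTop (𝓝 0) :=
      tendsto_zero_iff_norm_tendsto_zero.2 hBψ
    have hBconv : Tendsto (fun k => (B.comp P) (u (φ k))) atTop (𝓝 (B z)) := by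
      have heq : ∀ k, (B.comp P) (u (φ k)) = B (ψ k) + B z := by
        intro k
        rw [ContinuousLinearMap.comp_apply]
        show B (v (φ k)) = B (ψ k) + B z
        rw [hψ', map_sub, sub_add_cancel]
      simp only [heq]
      simpa using hB0.add (tendsto_const_nhds (x := B z))
    refine ⟨B z, ?_, φ, hφ, ?_⟩
    · exact mem_closure_of_tendsto hBconv
        (Eventually.of_forall fun k => Set.mem_image_of_mem _ (hu (φ k)))
    · rw [tendsto_iff_dist_tendsto_zero]
      have hup : Tendsto (fun k => (1:ℝ)/(φ k + 1)) atTop (𝓝 0) := by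
        refine squeeze_zero (g := fun k : ℕ => (1:ℝ)/((k:ℝ)+1)) (fun k => by positivity)
          (fun k => ?_) tendsto_one_div_add_atTop_nhds_zero_nat
        apply div_le_div_of_nonneg_left one_pos.le (by positivity)
        have h9 : (k:ℝ) ≤ (φ k : ℝ) := by exact_mod_cast hφ.le_apply
        linarith
      have hBd : Tendsto (fun k => dist ((B.comp P) (u (φ k))) (B z)) atTop (𝓝 0) :=
        tendsto_iff_dist_tendsto_zero.1 hBconv
      refine squeeze_zero (g := fun k => 1/(φ k + 1) + dist ((B.comp P) (u (φ k))) (B z))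
        (fun k => dist_nonneg) (fun k => ?_) ?_
      · calc dist ((y ∘ φ) k) (B z)
            ≤ dist (y (φ k)) ((B.comp P) (u (φ k))) + dist ((B.comp P) (u (φ k))) (B z) :=
              dist_triangle _ _ _
          _ ≤ 1/(φ k + 1) + dist ((B.comp P) (u (φ k))) (B z) := by
              have := (hdist (φ k)).le
              push_cast at this ⊢
              linarith
      · simpa using hup.add hBd
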